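/- Let G = (V,A) be a finite directed graph with A nonempty and let b : 2^V → ℤ be an integer-valued submodular function. Let κ ∈ ℤ, and assume there exists a submodular flow x and a real σ₀ ≥ 0 with κ ≤ x(e) ≤ κ + σ₀ for all e ∈ A. Define s(κ) as the minimum σ ≥ 0 such that some submodular flow x satisfies κ ≤ x(e) ≤ κ + σ for all e, and s_I(κ) as the minimum nonnegative integer σ such that some integral submodular flow x ∈ ℤ^A satisfies κ ≤ x(e) ≤ κ + σ for all e. Then s_I(κ) = ⌈s(κ)⌉. -/

import Mathlib

open Finset

def inEdges {V A : Type*} [Fintype A] [DecidableEq V] (t hd : A → V) (X : Finset V) : Finset A :=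
  univ.filter fun e => t e ∉ X ∧ hd e ∈ X

def outEdges {V A : Type*} [Fintype A] [DecidableEq V] (t hd : A → V) (X : Finset V) : Finset A :=
  univ.filter fun e => t e ∈ X ∧ hd e ∉ X

def rhoF {V A : Type*} [Fintype A] [DecidableEq V] (t hd : A → V) (x : A → ℝ) (X : Finset V) : ℝ :=
  ∑ e ∈ inEdges t hd X, x e

def deltaF {V A : Type*} [Fintype A] [DecidableEq V] (t hd : A → V) (x : A → ℝ) (X : Finset V) : ℝ :=
  ∑ e ∈ outEdges t hd X, x e

def rhoC {V A : Type*} [Fintype A] [DecidableEq V] (t hd : A → V) (X : Finset V) : ℕ :=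
  (inEdges t hd X).card

def deltaC {V A : Type*} [Fintype A] [DecidableEq V] (t hd : A → V) (X : Finset V) : ℕ :=
  (outEdges t hd X).card

def partC {V A : Type*} [Fintype A] [DecidableEq V] (t hd : A → V) (X : Finset V) : ℝ :=
  (rhoC t hd X : ℝ) - (deltaC t hd X : ℝ)

def Submodular {V : Type*} [DecidableEq V] (b : Finset V → ℝ) : Prop :=
  ∀ X Y : Finset V, b (X ∪ Y) + b (X ∩ Y) ≤ b X + b Y

def IsSubmodularFlow {V A : Type*} [Fintype A] [DecidableEq V] (t hd : A → V)
    (b : Finset V → ℝ) (x : A → ℝ) : Prop :=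
  ∀ X : Finset V, rhoF t hd x X - deltaF t hd x X ≤ b X

noncomputable def spread {A : Type*} [Fintype A] [Nonempty A] (x : A → ℝ) : ℝ :=
  univ.sup' univ_nonempty x - univ.inf' univ_nonempty x

noncomputable def sigmaStar {V A : Type*} [Fintype A] [DecidableEq V] [Nonempty A]
    (t hd : A → V) (b : Finset V → ℝ) : ℝ :=
  sInf {s : ℝ | ∃ x : A → ℝ, IsSubmodularFlow t hd b x ∧ spread x = s}


set_option linter.unusedSectionVars false
set_option maxHeartbeats 1000000

set_option linter.unusedSectionVars false
set_option maxHeartbeats 1000000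

section EG
variable {V A : Type*} [Fintype V] [Fintype A] [DecidableEq V]
variable (t hd : A → V)

noncomputable def excess (x : A → ℝ) (X : Finset V) : ℝ :=
  ∑ e ∈ univ.filter (fun e => hd e ∈ X), x e - ∑ e ∈ univ.filter (fun e => t e ∈ X), x e

lemma excess_eq (x : A → ℝ) (X : Finset V) :
    excess t hd x X = (∑ e ∈ univ.filter (fun e => t e ∉ X ∧ hd e ∈ X), x e)
      - ∑ e ∈ univ.filter (fun e => t e ∈ X ∧ hd e ∉ X), x e := by
  unfold excess
  rw [← Finset.sum_filter_add_sum_filter_not (univ.filter (fun e => hd e ∈ X)) (fun e => t e ∈ X),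
      ← Finset.sum_filter_add_sum_filter_not (univ.filter (fun e => t e ∈ X)) (fun e => hd e ∈ X)]
  rw [Finset.filter_filter, Finset.filter_filter, Finset.filter_filter, Finset.filter_filter]
  have h1 : (univ.filter fun a => hd a ∈ X ∧ t a ∈ X) = univ.filter fun a => t a ∈ X ∧ hd a ∈ X := by
    apply Finset.filter_congr; intro e _; simp [and_comm]
  have h2 : (univ.filter fun a => hd a ∈ X ∧ ¬ t a ∈ X) = univ.filter fun a => t a ∉ X ∧ hd a ∈ X := by
    apply Finset.filter_congr; intro e _; simp [and_comm]
  rw [h1, h2]; ring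

lemma excess_smul_add (x y : A → ℝ) (c : ℝ) (X : Finset V) :
    excess t hd (fun e => x e + c * y e) X = excess t hd x X + c * excess t hd y X := by
  unfold excess
  rw [Finset.sum_add_distrib, Finset.sum_add_distrib, ← Finset.mul_sum, ← Finset.mul_sum]
  ring

lemma excess_empty (x : A → ℝ) : excess t hd x ∅ = 0 := by simp [excess]

lemma excess_univ (x : A → ℝ) : excess t hd x univ = 0 := by simp [excess]

lemma excess_modular (x : A → ℝ) (X Y : Finset V) :
    excess t hd x (X ∪ Y) + excess t hd x (X ∩ Y) = excess t hd x X + excess t hd x Y := by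
  unfold excess
  have key : ∀ f : A → V,
      (∑ e ∈ univ.filter (fun e => f e ∈ X ∪ Y), x e) + ∑ e ∈ univ.filter (fun e => f e ∈ X ∩ Y), x e
      = (∑ e ∈ univ.filter (fun e => f e ∈ X), x e) + ∑ e ∈ univ.filter (fun e => f e ∈ Y), x e := by
    intro f
    rw [Finset.sum_filter, Finset.sum_filter, Finset.sum_filter, Finset.sum_filter,
      ← Finset.sum_add_distrib, ← Finset.sum_add_distrib]
    apply Finset.sum_congr rfl
    intro e _
    by_cases h1 : f e ∈ X <;> by_cases h2 : f e ∈ Y <;>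
      simp [Finset.mem_union, Finset.mem_inter, h1, h2]
  have k1 := key hd
  have k2 := key t
  linarith

noncomputable def Dnode (ν : V → Finset V) (y : A → ℝ) (Z : Finset V) : ℝ :=
  ∑ e ∈ univ.filter (fun e => ν (hd e) = Z), y e - ∑ e ∈ univ.filter (fun e => ν (t e) = Z), y e

lemma sum_fiber_eq (g : A → Finset V) (y : A → ℝ) (𝒞 : Finset (Finset V))
    (h1 : ∀ e : A, g e ∈ 𝒞) (Z : Finset V) :
    ∑ e ∈ univ.filter (fun e => g e ⊆ Z), y e
      = ∑ W ∈ 𝒞.filter (· ⊆ Z), ∑ e ∈ univ.filter (fun e => g e = W), y e := by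
  rw [← Finset.sum_fiberwise_of_maps_to (g := g) (t := 𝒞.filter (· ⊆ Z))
    (fun e he => by simp_all [Finset.mem_filter])]
  apply Finset.sum_congr rfl
  intro W hW
  apply Finset.sum_congr
  · ext e
    simp only [Finset.mem_filter, Finset.mem_univ, true_and]
    constructor
    · rintro ⟨_, h⟩; exact h
    · rintro h; exact ⟨by rw [h]; exact (Finset.mem_filter.1 hW).2, h⟩
  · intro _ _; rfl

lemma excess_eq_sum_Dnode (ν : V → Finset V) (𝒞 : Finset (Finset V))
    (h1 : ∀ v, ν v ∈ 𝒞) (h2 : ∀ v Z, Z ∈ 𝒞 → (v ∈ Z ↔ ν v ⊆ Z))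
    (y : A → ℝ) (Z : Finset V) (hZ : Z ∈ 𝒞) :
    excess t hd y Z = ∑ W ∈ 𝒞.filter (· ⊆ Z), Dnode t hd ν y W := by
  unfold excess Dnode
  rw [Finset.sum_sub_distrib]
  congr 1
  · rw [← sum_fiber_eq (fun e => ν (hd e)) y 𝒞 (fun e => h1 (hd e)) Z]
    apply Finset.sum_congr
    · apply Finset.filter_congr; intro e _; simpa using h2 (hd e) Z hZ
    · intros; rfl
  · rw [← sum_fiber_eq (fun e => ν (t e)) y 𝒞 (fun e => h1 (t e)) Z]
    apply Finset.sum_congr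
    · apply Finset.filter_congr; intro e _; simpa using h2 (t e) Z hZ
    · intros; rfl

end EG

def isInt (r : ℝ) : Prop := ∃ n : ℤ, r = (n : ℝ)

lemma isInt_sum {A : Type*} {s : Finset A} {f : A → ℝ} (h : ∀ e ∈ s, isInt (f e)) :
    isInt (∑ e ∈ s, f e) := by
  classical
  induction s using Finset.induction_on with
  | empty => exact ⟨0, by simp⟩
  | @insert a s' hx ih =>
      obtain ⟨n, hn⟩ := h a (Finset.mem_insert_self a s')
      obtain ⟨m, hm⟩ := ih (fun e he => h e (Finset.mem_insert_of_mem he))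
      exact ⟨n + m, by rw [Finset.sum_insert hx, hn, hm]; push_cast; ring⟩

lemma isInt_sub {r s : ℝ} (hr : isInt r) (hs : isInt s) : isInt (r - s) := by
  obtain ⟨n, hn⟩ := hr; obtain ⟨m, hm⟩ := hs
  exact ⟨n - m, by rw [hn, hm]; push_cast; ring⟩

lemma isInt_add {r s : ℝ} (hr : isInt r) (hs : isInt s) : isInt (r + s) := by
  obtain ⟨n, hn⟩ := hr; obtain ⟨m, hm⟩ := hs
  exact ⟨n + m, by rw [hn, hm]; push_cast; ring⟩

section Chain
variable {V A : Type*} [Fintype V] [Fintype A] [DecidableEq V]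
variable (t hd : A → V)

lemma chain_exists_min (𝒞 : Finset (Finset V)) (hc : IsChain (· ⊆ ·) (𝒞 : Set (Finset V)))
    (hne : 𝒞.Nonempty) : ∃ Z ∈ 𝒞, ∀ W ∈ 𝒞, Z ⊆ W := by
  obtain ⟨Z, hZ, hmin⟩ : ∃ m ∈ 𝒞, ∀ x ∈ 𝒞, ¬ x < m := by
    obtain ⟨m, hm⟩ := Finset.exists_minimal hne
    exact ⟨m, hm.1, fun x hx hlt => absurd (hm.2 hx hlt.le) (not_le_of_gt hlt)⟩
  refine ⟨Z, hZ, fun W hW => ?_⟩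
  rcases eq_or_ne Z W with rfl | hne'
  · exact subset_rfl
  · rcases hc hZ hW hne' with h | h
    · exact h
    · exact absurd (lt_of_le_of_ne h (fun hE => hne' hE.symm)) (hmin W hW)

lemma chain_exists_max (𝒞 : Finset (Finset V)) (hc : IsChain (· ⊆ ·) (𝒞 : Set (Finset V)))
    (hne : 𝒞.Nonempty) : ∃ Z ∈ 𝒞, ∀ W ∈ 𝒞, W ⊆ Z := by
  obtain ⟨Z, hZ, hmax⟩ : ∃ m ∈ 𝒞, ∀ x ∈ 𝒞, ¬ m < x := by
    obtain ⟨m, hm⟩ := Finset.exists_maximal hne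
    exact ⟨m, hm.1, fun x hx hlt => absurd (hm.2 hx hlt.le) (not_le_of_gt hlt)⟩
  refine ⟨Z, hZ, fun W hW => ?_⟩
  rcases eq_or_ne Z W with rfl | hne'
  · exact subset_rfl
  · rcases hc hZ hW hne' with h | h
    · exact absurd (lt_of_le_of_ne h hne') (hmax W hW)
    · exact h

lemma vanish_on_lattice (T : Set (Finset V))
    (hT : ∀ X ∈ T, ∀ Y ∈ T, X ∪ Y ∈ T ∧ X ∩ Y ∈ T)
    (𝒞 : Finset (Finset V)) (h𝒞T : ∀ Z ∈ 𝒞, Z ∈ T)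
    (hchain : IsChain (· ⊆ ·) (𝒞 : Set (Finset V)))
    (hmaxl : ∀ Y ∈ T, (∀ W ∈ 𝒞, W ⊆ Y ∨ Y ⊆ W) → Y ∈ 𝒞)
    (htop : (univ : Finset V) ∈ 𝒞) (hbot : (∅ : Finset V) ∈ 𝒞)
    (y : A → ℝ) (hvan : ∀ Z ∈ 𝒞, excess t hd y Z = 0) :
    ∀ Z ∈ T, excess t hd y Z = 0 := by
  classical
  have main : ∀ n : ℕ, ∀ Z ∈ T, ∀ M ∈ 𝒞, Z ⊆ M → (∀ W ∈ 𝒞, Z ⊆ W → M ⊆ W) →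
      M.card ≤ n → excess t hd y Z = 0 := by
    intro n
    induction n with
    | zero =>
        intro Z hZ M hM hZM _ hcard
        have : M = ∅ := Finset.card_eq_zero.1 (Nat.le_zero.1 hcard)
        have : Z = ∅ := Finset.subset_empty.1 (this ▸ hZM)
        rw [this]; exact excess_empty t hd y
    | succ n ih =>
        intro Z hZ M hM hZM hleast hcard
        by_cases hZC : Z ∈ 𝒞
        · exact hvan Z hZC
        have hZneM : Z ≠ M := fun h => hZC (h ▸ hM)
        by_cases hMe : M = ∅
        · have : Z = ∅ := Finset.subset_empty.1 (hMe ▸ hZM)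
          rw [this]; exact excess_empty t hd y
        have hfilne : (𝒞.filter (· ⊂ M)).Nonempty := by
          refine ⟨∅, Finset.mem_filter.2 ⟨hbot, ?_⟩⟩
          exact Finset.empty_ssubset.2 (Finset.nonempty_iff_ne_empty.2 hMe)
        have hchain' : IsChain (· ⊆ ·) ((𝒞.filter (· ⊂ M)) : Set (Finset V)) := by
          refine hchain.mono ?_
          intro W hW
          simp only [Finset.coe_filter, Set.mem_setOf_eq] at hW
          exact hW.1
        obtain ⟨P, hPmem, hPmax⟩ := chain_exists_max (𝒞.filter (· ⊂ M)) hchain' hfilne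
        have hP𝒞 : P ∈ 𝒞 := (Finset.mem_filter.1 hPmem).1
        have hPM : P ⊂ M := (Finset.mem_filter.1 hPmem).2
        have hZP : ¬ Z ⊆ P := by
          intro h
          exact absurd (hleast P hP𝒞 h) (fun hMP => (lt_irrefl M) (lt_of_le_of_lt hMP hPM))
        have hYT : Z ∪ P ∈ T := (hT Z hZ P (h𝒞T P hP𝒞)).1
        have hYM : Z ∪ P ⊆ M := Finset.union_subset hZM hPM.subset
        have hYchain : Z ∪ P ∈ 𝒞 := by
          apply hmaxl _ hYT
          intro W hW
          rcases eq_or_ne W M with rfl | hWM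
          · exact Or.inr hYM
          rcases hchain.total (Finset.mem_coe.2 hW) (Finset.mem_coe.2 hM) with h | h
          · have hWP : W ⊆ P := hPmax W (Finset.mem_filter.2 ⟨hW, lt_of_le_of_ne h hWM⟩)
            exact Or.inl (hWP.trans Finset.subset_union_right)
          · exact Or.inr (hYM.trans h)
        have hYeqM : Z ∪ P = M := by
          by_contra hne'
          have : Z ∪ P ⊆ P := hPmax _ (Finset.mem_filter.2 ⟨hYchain, lt_of_le_of_ne hYM hne'⟩)
          exact hZP (Finset.subset_union_left.trans this)
        have hIT : Z ∩ P ∈ T := (hT Z hZ P (h𝒞T P hP𝒞)).2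
        obtain ⟨M'', hM''mem, hM''min⟩ := chain_exists_min (𝒞.filter (fun W => Z ∩ P ⊆ W))
          (hchain.mono (by intro W hW; simp only [Finset.coe_filter, Set.mem_setOf_eq] at hW; exact hW.1))
          ⟨P, Finset.mem_filter.2 ⟨hP𝒞, Finset.inter_subset_right⟩⟩
        have hM''P : M'' ⊆ P := hM''min P (Finset.mem_filter.2 ⟨hP𝒞, Finset.inter_subset_right⟩)
        have hIH : excess t hd y (Z ∩ P) = 0 := by
          apply ih (Z ∩ P) hIT M'' (Finset.mem_filter.1 hM''mem).1
            (Finset.mem_filter.1 hM''mem).2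
            (fun W hW hsub => hM''min W (Finset.mem_filter.2 ⟨hW, hsub⟩))
          have h1 : M''.card ≤ P.card := Finset.card_le_card hM''P
          have h2 : P.card < M.card := Finset.card_lt_card hPM
          omega
        have hmod := excess_modular t hd y Z P
        rw [hYeqM] at hmod
        have h1 : excess t hd y M = 0 := hvan M hM
        have h2 : excess t hd y P = 0 := hvan P hP𝒞
        linarith
  intro Z hZ
  obtain ⟨M, hMmem, hMmin⟩ := chain_exists_min (𝒞.filter (fun W => Z ⊆ W))
    (hchain.mono (by intro W hW; simp only [Finset.coe_filter, Set.mem_setOf_eq] at hW; exact hW.1))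
    ⟨univ, Finset.mem_filter.2 ⟨htop, Finset.subset_univ Z⟩⟩
  exact main M.card Z hZ M
    (Finset.mem_filter.1 hMmem).1 (Finset.mem_filter.1 hMmem).2
    (fun W hW hsub => hMmin W (Finset.mem_filter.2 ⟨hW, hsub⟩)) le_rfl

end Chain

lemma la_kernel {α β : Type*} [Fintype α] [DecidableEq α] [DecidableEq β]
    (F : Finset α) (J : Finset β) (f g : α → β)
    (hf : ∀ a ∈ F, f a ∈ J) (hg : ∀ a ∈ F, g a ∈ J)
    (hJF : J.card ≤ F.card) (hFne : F.Nonempty) :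
    ∃ y : α → ℝ, y ≠ 0 ∧ (∀ a ∉ F, y a = 0) ∧
      ∀ z : β, (∑ a ∈ F.filter (fun a => f a = z), y a) = ∑ a ∈ F.filter (fun a => g a = z), y a := by
  classical
  let Ψ : (↥F → ℝ) →ₗ[ℝ] (↥J → ℝ) :=
    { toFun := fun y z => (∑ a ∈ univ.filter (fun a : ↥F => f a.1 = z.1), y a)
        - ∑ a ∈ univ.filter (fun a : ↥F => g a.1 = z.1), y a
      map_add' := by
        intro y₁ y₂; funext z
        simp only [Pi.add_apply, Finset.sum_add_distrib]; ring
      map_smul' := by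
        intro c y; funext z
        simp only [Pi.smul_apply, smul_eq_mul, RingHom.id_apply, ← Finset.mul_sum]; ring }
  let φ : (↥J → ℝ) →ₗ[ℝ] ℝ :=
    { toFun := fun w => ∑ z : ↥J, w z
      map_add' := by intro a b; simp [Finset.sum_add_distrib]
      map_smul' := by intro c a; simp [Finset.mul_sum] }
  have hcomp : ∀ y, φ (Ψ y) = 0 := by
    intro y
    show (∑ z : ↥J, ((∑ a ∈ univ.filter (fun a : ↥F => f a.1 = z.1), y a)
        - ∑ a ∈ univ.filter (fun a : ↥F => g a.1 = z.1), y a)) = 0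
    rw [Finset.sum_sub_distrib]
    have h1 : (∑ z : ↥J, ∑ a ∈ univ.filter (fun a : ↥F => f a.1 = z.1), y a)
        = ∑ a : ↥F, y a := by
      rw [← Finset.sum_fiberwise_of_maps_to
        (g := fun a : ↥F => (⟨f a.1, hf a.1 a.2⟩ : ↥J)) (t := Finset.univ)
        (fun a _ => Finset.mem_univ _)]
      apply Finset.sum_congr rfl
      intro z _
      apply Finset.sum_congr _ (fun _ _ => rfl)
      apply Finset.filter_congr
      intro a _
      simp [Subtype.ext_iff]
    have h2 : (∑ z : ↥J, ∑ a ∈ univ.filter (fun a : ↥F => g a.1 = z.1), y a)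
        = ∑ a : ↥F, y a := by
      rw [← Finset.sum_fiberwise_of_maps_to
        (g := fun a : ↥F => (⟨g a.1, hg a.1 a.2⟩ : ↥J)) (t := Finset.univ)
        (fun a _ => Finset.mem_univ _)]
      apply Finset.sum_congr rfl
      intro z _
      apply Finset.sum_congr _ (fun _ _ => rfl)
      apply Finset.filter_congr
      intro a _
      simp [Subtype.ext_iff]
    rw [h1, h2, sub_self]
  obtain ⟨a₀, ha₀⟩ := hFne
  have hJne : J.Nonempty := ⟨f a₀, hf a₀ ha₀⟩
  have hJcard : 0 < J.card := hJne.card_pos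
  have hφtop : LinearMap.range φ = ⊤ := by
    rw [LinearMap.range_eq_top]
    intro r
    refine ⟨fun _ => r / J.card, ?_⟩
    show (∑ _z : ↥J, r / J.card) = r
    rw [Finset.sum_const, nsmul_eq_mul]
    rw [Finset.card_univ, Fintype.card_coe]
    field_simp
  have hker : ∃ y : ↥F → ℝ, y ≠ 0 ∧ Ψ y = 0 := by
    by_contra hno
    push_neg at hno
    have hinj : Function.Injective Ψ := by
      rw [← LinearMap.ker_eq_bot, Submodule.eq_bot_iff]
      intro y hy
      by_contra hy0
      exact (hno y hy0) hy
    have h1 : Module.finrank ℝ (↥F → ℝ) = F.card := by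
      rw [Module.finrank_pi]; simp
    have h2 : Module.finrank ℝ (↥F → ℝ) = Module.finrank ℝ (LinearMap.range Ψ) :=
      (LinearMap.finrank_range_of_inj hinj).symm
    have hrange : LinearMap.range Ψ ≤ LinearMap.ker φ := by
      rintro w ⟨y, rfl⟩
      exact hcomp y
    have h3 : Module.finrank ℝ (LinearMap.range Ψ) ≤ Module.finrank ℝ (LinearMap.ker φ) :=
      Submodule.finrank_mono hrange
    have h4 : Module.finrank ℝ (LinearMap.ker φ) + 1 = J.card := by
      have h5 := LinearMap.finrank_range_add_finrank_ker φ
      rw [hφtop] at h5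
      rw [finrank_top, Module.finrank_self, Module.finrank_pi] at h5
      simp only [Fintype.card_coe] at h5
      omega
    omega
  obtain ⟨y, hy0, hyker⟩ := hker
  -- extend y by zero
  refine ⟨fun a => if h : a ∈ F then y ⟨a, h⟩ else 0, ?_, ?_, ?_⟩
  · intro h
    apply hy0
    funext a
    have := congrFun h a.1
    simpa [a.2] using this
  · intro a ha; simp [ha]
  · intro z
    have transfer : ∀ (p : α → Prop) (hp : DecidablePred p),
        (∑ a ∈ F.filter p, (fun a => if h : a ∈ F then y ⟨a, h⟩ else 0) a)
          = ∑ a ∈ univ.filter (fun a : ↥F => p a.1), y a := by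
      intro p hp
      rw [Finset.sum_filter, Finset.sum_filter]
      rw [← Finset.sum_attach F (fun a => if p a then (if h : a ∈ F then y ⟨a, h⟩ else 0) else 0)]
      rw [← Finset.sum_filter, ← Finset.sum_filter]
      apply Finset.sum_congr
      · ext a; simp
      · intro a ha
        simp [a.2]
    by_cases hz : z ∈ J
    · have := congrFun hyker ⟨z, hz⟩
      simp only [Pi.zero_apply] at this
      have h0 : (∑ a ∈ univ.filter (fun a : ↥F => f a.1 = z), y a)
          = ∑ a ∈ univ.filter (fun a : ↥F => g a.1 = z), y a := by
        have := sub_eq_zero.1 this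
        exact this
      rw [transfer _ _, transfer _ _, h0]
    · have hle : F.filter (fun a => f a = z) = ∅ := by
        apply Finset.filter_eq_empty_iff.2
        intro a ha h; exact hz (h ▸ hf a ha)
      have hri : F.filter (fun a => g a = z) = ∅ := by
        apply Finset.filter_eq_empty_iff.2
        intro a ha h; exact hz (h ▸ hg a ha)
      rw [hle, hri]
section Core
open Finset
variable {V A : Type*} [Fintype V] [Fintype A] [DecidableEq V] [DecidableEq A]

lemma core (t hd : A → V) (b : Finset V → ℝ)
    (hbsub : ∀ X Y : Finset V, b (X ∪ Y) + b (X ∩ Y) ≤ b X + b Y)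
    (hbint : ∀ X, isInt (b X))
    (l u : A → ℤ) (w : A → ℝ)
    (hw : ∀ X, excess t hd w X ≤ b X)
    (hbox : ∀ e, (l e : ℝ) ≤ w e ∧ w e ≤ (u e : ℝ))
    (e₀ : A) (hfrac : ¬ isInt (w e₀)) :
    ∃ y : A → ℝ, y ≠ 0 ∧
      (∀ X, excess t hd (fun e => w e + y e) X ≤ b X) ∧
      (∀ X, excess t hd (fun e => w e - y e) X ≤ b X) ∧
      (∀ e, (l e : ℝ) ≤ w e + y e ∧ w e + y e ≤ (u e : ℝ)) ∧
      (∀ e, (l e : ℝ) ≤ w e - y e ∧ w e - y e ≤ (u e : ℝ)) := by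
  classical
  set F : Finset A := univ.filter (fun e => ¬ isInt (w e)) with hFdef
  have hFmem : ∀ e, e ∈ F ↔ ¬ isInt (w e) := by
    intro e; simp [hFdef]
  have he₀F : e₀ ∈ F := (hFmem e₀).2 hfrac
  set T : Set (Finset V) := {X | X = ∅ ∨ X = univ ∨ excess t hd w X = b X} with hTdef
  have hemptyT : (∅ : Finset V) ∈ T := Or.inl rfl
  have hunivT : (univ : Finset V) ∈ T := Or.inr (Or.inl rfl)
  have hTlat : ∀ X ∈ T, ∀ Y ∈ T, X ∪ Y ∈ T ∧ X ∩ Y ∈ T := by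
    intro X hX Y hY
    rcases hX with rfl | rfl | hX
    · constructor
      · simpa [Finset.empty_union] using hY
      · simp only [Finset.empty_inter]; exact hemptyT
    · constructor
      · exact Or.inr (Or.inl (by simp))
      · simpa [Finset.univ_inter] using hY
    rcases hY with rfl | rfl | hY
    · constructor
      · rw [Finset.union_empty]; exact Or.inr (Or.inr hX)
      · simp only [Finset.inter_empty]; exact hemptyT
    · constructor
      · exact Or.inr (Or.inl (by simp))
      · rw [Finset.inter_univ]; exact Or.inr (Or.inr hX)
    · have h1 : excess t hd w (X ∪ Y) ≤ b (X ∪ Y) := hw _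
      have h2 : excess t hd w (X ∩ Y) ≤ b (X ∩ Y) := hw _
      have hmod := excess_modular t hd w X Y
      have hsub := hbsub X Y
      constructor
      · exact Or.inr (Or.inr (by linarith))
      · exact Or.inr (Or.inr (by linarith))
  have hTint : ∀ X ∈ T, isInt (excess t hd w X) := by
    intro X hX
    rcases hX with rfl | rfl | hX
    · exact ⟨0, by rw [excess_empty]; simp⟩
    · exact ⟨0, by rw [excess_univ]; simp⟩
    · rw [hX]; exact hbint X
  -- maximal chain
  set S : Finset (Finset (Finset V)) :=
    univ.filter (fun C => (∀ Z ∈ C, Z ∈ T) ∧ IsChain (· ⊆ ·) (C : Set (Finset V))) with hSdef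
  have hSne : S.Nonempty := by
    refine ⟨{∅}, ?_⟩
    rw [hSdef, Finset.mem_filter]
    refine ⟨Finset.mem_univ _, fun Z hZ => ?_, ?_⟩
    · rw [Finset.mem_singleton] at hZ; rw [hZ]; exact hemptyT
    · rw [Finset.coe_singleton]; exact Set.Subsingleton.isChain Set.subsingleton_singleton
  obtain ⟨𝒞, h𝒞S, h𝒞max⟩ := Finset.exists_max_image S Finset.card hSne
  rw [hSdef, Finset.mem_filter] at h𝒞S
  obtain ⟨-, h𝒞T, h𝒞chain⟩ := h𝒞S
  have hmaxl : ∀ Y ∈ T, (∀ W ∈ 𝒞, W ⊆ Y ∨ Y ⊆ W) → Y ∈ 𝒞 := by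
    intro Y hYT hcomp
    by_contra hY
    have hins : insert Y 𝒞 ∈ S := by
      rw [hSdef, Finset.mem_filter]
      refine ⟨Finset.mem_univ _, fun Z hZ => ?_, ?_⟩
      · rcases Finset.mem_insert.1 hZ with rfl | hZ
        · exact hYT
        · exact h𝒞T Z hZ
      · rw [Finset.coe_insert]
        apply h𝒞chain.insert
        intro W hW _
        exact (hcomp W hW).symm
    have := h𝒞max _ hins
    rw [Finset.card_insert_of_notMem hY] at this
    omega
  have htop : (univ : Finset V) ∈ 𝒞 := hmaxl univ hunivT (fun W _ => Or.inl (Finset.subset_univ W))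
  have hbot : (∅ : Finset V) ∈ 𝒞 := hmaxl ∅ hemptyT (fun W _ => Or.inr (Finset.empty_subset W))
  -- the minimal chain element containing each vertex
  have hν' : ∀ v : V, ∃ Z, Z ∈ 𝒞 ∧ v ∈ Z ∧ ∀ W ∈ 𝒞, v ∈ W → Z ⊆ W := by
    intro v
    obtain ⟨Z, hZ, hmin⟩ := chain_exists_min (𝒞.filter (fun W => v ∈ W))
      (h𝒞chain.mono (by intro W hW; simp only [Finset.coe_filter, Set.mem_setOf_eq] at hW; exact hW.1))
      ⟨univ, Finset.mem_filter.2 ⟨htop, Finset.mem_univ v⟩⟩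
    exact ⟨Z, (Finset.mem_filter.1 hZ).1, (Finset.mem_filter.1 hZ).2,
      fun W hW hvW => hmin W (Finset.mem_filter.2 ⟨hW, hvW⟩)⟩
  choose ν hν𝒞 hνmem hνmin using hν'
  have h2 : ∀ v Z, Z ∈ 𝒞 → (v ∈ Z ↔ ν v ⊆ Z) :=
    fun v Z hZ => ⟨fun h => hνmin v Z hZ h, fun h => h (hνmem v)⟩
  -- integrality of the node quantities
  have hDint : ∀ Z ∈ 𝒞, isInt (Dnode t hd ν w Z) := by
    intro Z hZ
    by_cases hZe : Z = ∅
    · subst hZe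
      have h1 : (univ.filter (fun e => ν (hd e) = ∅)) = (∅ : Finset A) := by
        apply Finset.filter_eq_empty_iff.2
        intro e _ h; exact Finset.notMem_empty _ (h ▸ hνmem (hd e))
      have h2' : (univ.filter (fun e => ν (t e) = ∅)) = (∅ : Finset A) := by
        apply Finset.filter_eq_empty_iff.2
        intro e _ h; exact Finset.notMem_empty _ (h ▸ hνmem (t e))
      unfold Dnode
      rw [h1, h2']; exact ⟨0, by simp⟩
    obtain ⟨P, hPmem, hPmax⟩ := chain_exists_max (𝒞.filter (· ⊂ Z))
      (h𝒞chain.mono (by intro W hW; simp only [Finset.coe_filter, Set.mem_setOf_eq] at hW; exact hW.1))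
      ⟨∅, Finset.mem_filter.2 ⟨hbot, Finset.empty_ssubset.2 (Finset.nonempty_iff_ne_empty.2 hZe)⟩⟩
    have hP𝒞 : P ∈ 𝒞 := (Finset.mem_filter.1 hPmem).1
    have hPZ : P ⊂ Z := (Finset.mem_filter.1 hPmem).2
    have hsplit : 𝒞.filter (· ⊆ Z) = insert Z (𝒞.filter (· ⊆ P)) := by
      ext W
      simp only [Finset.mem_filter, Finset.mem_insert]
      constructor
      · rintro ⟨hW𝒞, hWZ⟩
        rcases eq_or_ne W Z with rfl | hne'
        · exact Or.inl rfl
        · exact Or.inr ⟨hW𝒞, hPmax W (Finset.mem_filter.2 ⟨hW𝒞, lt_of_le_of_ne hWZ hne'⟩)⟩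
      · rintro (rfl | ⟨hW𝒞, hWP⟩)
        · exact ⟨hZ, subset_rfl⟩
        · exact ⟨hW𝒞, hWP.trans hPZ.subset⟩
    have hZnotin : Z ∉ 𝒞.filter (· ⊆ P) := by
      intro h
      exact (lt_irrefl Z) (lt_of_le_of_lt (Finset.mem_filter.1 h).2 hPZ)
    have hEZ := excess_eq_sum_Dnode t hd ν 𝒞 hν𝒞 h2 w Z hZ
    have hEP := excess_eq_sum_Dnode t hd ν 𝒞 hν𝒞 h2 w P hP𝒞
    rw [hsplit, Finset.sum_insert hZnotin] at hEZ
    have hDval : Dnode t hd ν w Z = excess t hd w Z - excess t hd w P := by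
      rw [hEZ, hEP]; ring
    rw [hDval]
    exact isInt_sub (hTint Z (h𝒞T Z hZ)) (hTint P (h𝒞T P hP𝒞))
  -- splitting a sum over all edges into its fractional part and an integral rest
  have hsum_int : ∀ (p : A → Prop) (hp : DecidablePred p), ∃ r : ℝ, isInt r ∧
      (∑ e ∈ univ.filter p, w e) = (∑ e ∈ F.filter p, w e) + r := by
    intro p hp
    refine ⟨∑ e ∈ (univ.filter p).filter (fun e => e ∉ F), w e, isInt_sum ?_, ?_⟩
    · intro e he
      have := (Finset.mem_filter.1 he).2
      rw [hFmem] at this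
      exact not_not.1 this
    · rw [← Finset.sum_filter_add_sum_filter_not (univ.filter p) (fun e => e ∈ F)]
      congr 1
      apply Finset.sum_congr _ (fun _ _ => rfl)
      ext e
      simp only [Finset.mem_filter, Finset.mem_univ, true_and, hFdef]
      tauto
  -- a nonzero direction supported on F with vanishing node quantities
  have hdir : ∃ y₀ : A → ℝ, y₀ ≠ 0 ∧ (∀ e, e ∉ F → y₀ e = 0) ∧
      ∀ Z, Dnode t hd ν y₀ Z = 0 := by
    by_cases hC1 : ∃ ebar ∈ F, ν (hd ebar) = ν (t ebar)
    · obtain ⟨ebar, hebarF, hebar⟩ := hC1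
      refine ⟨fun e => if e = ebar then (1:ℝ) else 0, ?_, ?_, ?_⟩
      · intro h
        have := congrFun h ebar
        simp at this
      · intro e he
        have : e ≠ ebar := fun h => he (h ▸ hebarF)
        simp [this]
      · intro Z
        unfold Dnode
        rw [Finset.sum_ite_eq' (univ.filter (fun e => ν (hd e) = Z)) ebar (fun _ => (1:ℝ)),
          Finset.sum_ite_eq' (univ.filter (fun e => ν (t e) = Z)) ebar (fun _ => (1:ℝ))]
        simp only [Finset.mem_filter, Finset.mem_univ, true_and, hebar]
        ring
    · push_neg at hC1
      set J : Finset (Finset V) := F.image (fun e => ν (hd e)) ∪ F.image (fun e => ν (t e)) with hJdef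
      have hfJ : ∀ e ∈ F, ν (hd e) ∈ J :=
        fun e he => Finset.mem_union_left _ (Finset.mem_image_of_mem _ he)
      have hgJ : ∀ e ∈ F, ν (t e) ∈ J :=
        fun e he => Finset.mem_union_right _ (Finset.mem_image_of_mem _ he)
      have hdeg : ∀ Z ∈ J, 2 ≤ (F.filter (fun e => ν (hd e) = Z)).card
          + (F.filter (fun e => ν (t e) = Z)).card := by
        intro Z hZJ
        have hZC : Z ∈ 𝒞 := by
          rcases Finset.mem_union.1 hZJ with h | h <;>
          · obtain ⟨e, -, rfl⟩ := Finset.mem_image.1 h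
            exact hν𝒞 _
        have hpos : 1 ≤ (F.filter (fun e => ν (hd e) = Z)).card
            + (F.filter (fun e => ν (t e) = Z)).card := by
          rcases Finset.mem_union.1 hZJ with h | h
          · obtain ⟨e, he, hal⟩ := Finset.mem_image.1 h
            have hmem : e ∈ F.filter (fun e => ν (hd e) = Z) := Finset.mem_filter.2 ⟨he, hal⟩
            have := Finset.card_pos.2 ⟨e, hmem⟩
            omega
          · obtain ⟨e, he, hal⟩ := Finset.mem_image.1 h
            have hmem : e ∈ F.filter (fun e => ν (t e) = Z) := Finset.mem_filter.2 ⟨he, hal⟩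
            have := Finset.card_pos.2 ⟨e, hmem⟩
            omega
        by_contra hlt
        have h01 : ((F.filter (fun e => ν (hd e) = Z)).card = 1
              ∧ (F.filter (fun e => ν (t e) = Z)).card = 0)
            ∨ ((F.filter (fun e => ν (hd e) = Z)).card = 0
              ∧ (F.filter (fun e => ν (t e) = Z)).card = 1) := by omega
        obtain ⟨r1, hr1int, hr1⟩ := hsum_int (fun e => ν (hd e) = Z) (fun _ => by infer_instance)
        obtain ⟨r2, hr2int, hr2⟩ := hsum_int (fun e => ν (t e) = Z) (fun _ => by infer_instance)
        have hD := hDint Z hZC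
        unfold Dnode at hD
        rw [hr1, hr2] at hD
        rcases h01 with ⟨hc1, hc2⟩ | ⟨hc1, hc2⟩
        · obtain ⟨estar, hestar⟩ := Finset.card_eq_one.1 hc1
          have hestarF : estar ∈ F := by
            have : estar ∈ F.filter (fun e => ν (hd e) = Z) := by
              rw [hestar]; exact Finset.mem_singleton_self estar
            exact (Finset.mem_filter.1 this).1
          rw [hestar, Finset.sum_singleton, Finset.card_eq_zero.1 hc2, Finset.sum_empty] at hD
          have hwe : w estar = (w estar + r1 - (0 + r2)) - r1 + r2 := by ring
          have : isInt (w estar) := by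
            rw [hwe]; exact isInt_add (isInt_sub hD hr1int) hr2int
          exact (hFmem estar).1 hestarF this
        · obtain ⟨estar, hestar⟩ := Finset.card_eq_one.1 hc2
          have hestarF : estar ∈ F := by
            have : estar ∈ F.filter (fun e => ν (t e) = Z) := by
              rw [hestar]; exact Finset.mem_singleton_self estar
            exact (Finset.mem_filter.1 this).1
          rw [hestar, Finset.sum_singleton, Finset.card_eq_zero.1 hc1, Finset.sum_empty] at hD
          have : isInt (r1 - ((0 + r1 - (w estar + r2)) + r2)) :=
            isInt_sub hr1int (isInt_add hD hr2int)
          have hwe : r1 - ((0 + r1 - (w estar + r2)) + r2) = w estar := by ring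
          rw [hwe] at this
          exact (hFmem estar).1 hestarF this
      have hcount1 : F.card = ∑ Z ∈ J, (F.filter (fun e => ν (hd e) = Z)).card :=
        Finset.card_eq_sum_card_fiberwise hfJ
      have hcount2 : F.card = ∑ Z ∈ J, (F.filter (fun e => ν (t e) = Z)).card :=
        Finset.card_eq_sum_card_fiberwise hgJ
      have hJF : J.card ≤ F.card := by
        have hs := Finset.sum_le_sum hdeg
        rw [Finset.sum_add_distrib, ← hcount1, ← hcount2, Finset.sum_const, smul_eq_mul] at hs
        omega
      obtain ⟨y₀, hy₀ne, hy₀supp, hy₀eq⟩ := la_kernel F J (fun e => ν (hd e)) (fun e => ν (t e))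
        hfJ hgJ hJF ⟨e₀, he₀F⟩
      refine ⟨y₀, hy₀ne, hy₀supp, ?_⟩
      intro Z
      have hres1 : (∑ e ∈ univ.filter (fun e => ν (hd e) = Z), y₀ e)
          = ∑ e ∈ F.filter (fun e => ν (hd e) = Z), y₀ e := by
        rw [← Finset.sum_filter_add_sum_filter_not
          (univ.filter (fun e => ν (hd e) = Z)) (fun e => e ∈ F)]
        have hz : (∑ e ∈ (univ.filter (fun e => ν (hd e) = Z)).filter (fun e => e ∉ F), y₀ e) = 0 :=
          Finset.sum_eq_zero (fun e he => hy₀supp e (Finset.mem_filter.1 he).2)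
        rw [hz, add_zero]
        apply Finset.sum_congr _ (fun _ _ => rfl)
        ext e
        simp only [Finset.mem_filter, Finset.mem_univ, true_and]
        tauto
      have hres2 : (∑ e ∈ univ.filter (fun e => ν (t e) = Z), y₀ e)
          = ∑ e ∈ F.filter (fun e => ν (t e) = Z), y₀ e := by
        rw [← Finset.sum_filter_add_sum_filter_not
          (univ.filter (fun e => ν (t e) = Z)) (fun e => e ∈ F)]
        have hz : (∑ e ∈ (univ.filter (fun e => ν (t e) = Z)).filter (fun e => e ∉ F), y₀ e) = 0 :=
          Finset.sum_eq_zero (fun e he => hy₀supp e (Finset.mem_filter.1 he).2)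
        rw [hz, add_zero]
        apply Finset.sum_congr _ (fun _ _ => rfl)
        ext e
        simp only [Finset.mem_filter, Finset.mem_univ, true_and]
        tauto
      unfold Dnode
      rw [hres1, hres2, hy₀eq Z, sub_self]
  obtain ⟨y₀, hy₀ne, hy₀supp, hDvan⟩ := hdir
  have hvanC : ∀ Z ∈ 𝒞, excess t hd y₀ Z = 0 := by
    intro Z hZ
    rw [excess_eq_sum_Dnode t hd ν 𝒞 hν𝒞 h2 y₀ Z hZ]
    exact Finset.sum_eq_zero (fun W _ => hDvan W)
  have hvanT : ∀ X ∈ T, excess t hd y₀ X = 0 :=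
    vanish_on_lattice t hd T hTlat 𝒞 h𝒞T h𝒞chain hmaxl htop hbot y₀ hvanC
  -- choose the scaling
  set g : Finset V → ℝ := fun X => if excess t hd w X < b X
    then (b X - excess t hd w X) / (|excess t hd y₀ X| + 1) else 1 with hgdef
  have hgpos : ∀ X, 0 < g X := by
    intro X
    by_cases h : excess t hd w X < b X
    · simp only [hgdef, if_pos h]
      apply div_pos (by linarith) (by positivity)
    · simp only [hgdef, if_neg h]; norm_num
  have hVne : (univ : Finset (Finset V)).Nonempty := ⟨∅, Finset.mem_univ _⟩
  set ε₁ : ℝ := (univ : Finset (Finset V)).inf' hVne g with hε₁def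
  have hε₁pos : 0 < ε₁ := by
    rw [hε₁def, Finset.lt_inf'_iff]
    intro X _
    exact hgpos X
  set gb : A → ℝ := fun e => min ((w e - (l e : ℝ)) / (|y₀ e| + 1))
    (((u e : ℝ) - w e) / (|y₀ e| + 1)) with hgbdef
  have hFne : F.Nonempty := ⟨e₀, he₀F⟩
  have hgbpos : ∀ e ∈ F, 0 < gb e := by
    intro e he
    have hle : (l e : ℝ) < w e :=
      lt_of_le_of_ne (hbox e).1 (fun h => (hFmem e).1 he ⟨l e, h.symm⟩)
    have hue : w e < (u e : ℝ) :=
      lt_of_le_of_ne (hbox e).2 (fun h => (hFmem e).1 he ⟨u e, h⟩)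
    rw [hgbdef]
    apply lt_min
    · apply div_pos (by linarith) (by positivity)
    · apply div_pos (by linarith) (by positivity)
  set ε₂ : ℝ := F.inf' hFne gb with hε₂def
  have hε₂pos : 0 < ε₂ := by
    rw [hε₂def, Finset.lt_inf'_iff]
    exact hgbpos
  set ε : ℝ := min ε₁ ε₂ with hεdef
  have hεpos : 0 < ε := lt_min hε₁pos hε₂pos
  obtain ⟨ew, hew⟩ := Function.ne_iff.1 hy₀ne
  have hflow : ∀ (s : ℝ), s = 1 ∨ s = -1 → ∀ X, excess t hd (fun e => w e + (s * ε) * y₀ e) X ≤ b X := by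
    intro s hs X
    rw [excess_smul_add]
    by_cases hXT : X ∈ T
    · rw [hvanT X hXT, mul_zero, add_zero]
      exact hw X
    · have hstrict : excess t hd w X < b X :=
        lt_of_le_of_ne (hw X) (fun h => hXT (Or.inr (Or.inr h)))
      have hgX : g X = (b X - excess t hd w X) / (|excess t hd y₀ X| + 1) := by
        simp only [hgdef, if_pos hstrict]
      have hεg : ε ≤ g X :=
        le_trans (min_le_left _ _) (Finset.inf'_le g (Finset.mem_univ X))
      have habs : 0 < |excess t hd y₀ X| + 1 := by positivity
      have hkey : ε * (|excess t hd y₀ X| + 1) ≤ b X - excess t hd w X := by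
        rw [← le_div_iff₀ habs]
        rw [hgX] at hεg
        exact hεg
      have hsbound : s * ε * excess t hd y₀ X ≤ ε * |excess t hd y₀ X| := by
        rcases hs with rfl | rfl
        · rw [one_mul]
          exact mul_le_mul_of_nonneg_left (le_abs_self _) hεpos.le
        · calc (-1 : ℝ) * ε * excess t hd y₀ X = ε * (-(excess t hd y₀ X)) := by ring
            _ ≤ ε * |excess t hd y₀ X| := mul_le_mul_of_nonneg_left (neg_le_abs _) hεpos.le
      nlinarith
  have hboxnew : ∀ (s : ℝ), s = 1 ∨ s = -1 → ∀ e,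
      (l e : ℝ) ≤ w e + (s * ε) * y₀ e ∧ w e + (s * ε) * y₀ e ≤ (u e : ℝ) := by
    intro s hs e
    by_cases heF : e ∈ F
    · have hεgb : ε ≤ gb e := le_trans (min_le_right _ _) (Finset.inf'_le gb heF)
      have habs : 0 < |y₀ e| + 1 := by positivity
      have hk1 : ε * (|y₀ e| + 1) ≤ w e - (l e : ℝ) := by
        rw [← le_div_iff₀ habs]
        exact le_trans hεgb (by rw [hgbdef]; exact min_le_left _ _)
      have hk2 : ε * (|y₀ e| + 1) ≤ (u e : ℝ) - w e := by
        rw [← le_div_iff₀ habs]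
        exact le_trans hεgb (by rw [hgbdef]; exact min_le_right _ _)
      have hup : s * ε * y₀ e ≤ ε * |y₀ e| := by
        rcases hs with rfl | rfl
        · rw [one_mul]; exact mul_le_mul_of_nonneg_left (le_abs_self _) hεpos.le
        · calc (-1 : ℝ) * ε * y₀ e = ε * (-(y₀ e)) := by ring
            _ ≤ ε * |y₀ e| := mul_le_mul_of_nonneg_left (neg_le_abs _) hεpos.le
      have hdown : -(ε * |y₀ e|) ≤ s * ε * y₀ e := by
        rcases hs with rfl | rfl
        · rw [one_mul]
          have := mul_le_mul_of_nonneg_left (neg_abs_le (y₀ e)) hεpos.le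
          linarith [this]
        · have := mul_le_mul_of_nonneg_left (le_abs_self (y₀ e)) hεpos.le
          nlinarith
      constructor
      · nlinarith
      · nlinarith
    · rw [hy₀supp e heF, mul_zero, add_zero]
      exact hbox e
  refine ⟨fun e => ε * y₀ e, ?_, ?_, ?_, ?_, ?_⟩
  · intro h
    have := congrFun h ew
    simp only [Pi.zero_apply] at this
    exact hew (by
      rcases mul_eq_zero.1 this with h' | h'
      · exact absurd h' hεpos.ne'
      · exact h')
  · intro X
    have := hflow 1 (Or.inl rfl) X
    simpa using this
  · intro X
    have := hflow (-1) (Or.inr rfl) X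
    have heq : (fun e => w e - ε * y₀ e) = (fun e => w e + ((-1) * ε) * y₀ e) := by
      funext e; ring
    rw [heq]
    exact this
  · intro e
    have := hboxnew 1 (Or.inl rfl) e
    simpa using this
  · intro e
    have := hboxnew (-1) (Or.inr rfl) e
    have heq : w e - ε * y₀ e = w e + ((-1) * ε) * y₀ e := by ring
    rw [heq]
    exact this

end Core

section EGmain
open Finset
variable {V A : Type*} [Fintype V] [Fintype A] [DecidableEq V] [DecidableEq A]

theorem eg_integrality (t hd : A → V) (b : Finset V → ℝ)
    (hbsub : ∀ X Y : Finset V, b (X ∪ Y) + b (X ∩ Y) ≤ b X + b Y)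
    (hbint : ∀ X, isInt (b X)) (l u : A → ℤ)
    (hfeas : ∃ x : A → ℝ, (∀ X, excess t hd x X ≤ b X) ∧
      ∀ e, (l e : ℝ) ≤ x e ∧ x e ≤ (u e : ℝ)) :
    ∃ z : A → ℤ, (∀ X, excess t hd (fun e => (z e : ℝ)) X ≤ b X) ∧
      ∀ e, l e ≤ z e ∧ z e ≤ u e := by
  classical
  set P : Set (A → ℝ) := {x | (∀ X, excess t hd x X ≤ b X) ∧
    ∀ e, (l e : ℝ) ≤ x e ∧ x e ≤ (u e : ℝ)} with hPdef
  have hPne : P.Nonempty := hfeas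
  have hcont : ∀ X : Finset V, Continuous (fun x : A → ℝ => excess t hd x X) := by
    intro X
    unfold excess
    exact (continuous_finset_sum _ (fun e _ => continuous_apply e)).sub
      (continuous_finset_sum _ (fun e _ => continuous_apply e))
  have hclosed : IsClosed P := by
    have : P = (⋂ X : Finset V, {x : A → ℝ | excess t hd x X ≤ b X}) ∩
        ⋂ e : A, ({x : A → ℝ | (l e : ℝ) ≤ x e} ∩ {x : A → ℝ | x e ≤ (u e : ℝ)}) := by
      ext x
      simp only [hPdef, Set.mem_setOf_eq, Set.mem_inter_iff, Set.mem_iInter, forall_and]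
    rw [this]
    apply IsClosed.inter
    · exact isClosed_iInter (fun X => isClosed_le (hcont X) continuous_const)
    · exact isClosed_iInter (fun e => IsClosed.inter
        (isClosed_le continuous_const (continuous_apply e))
        (isClosed_le (continuous_apply e) continuous_const))
  have hcompact : IsCompact P := by
    apply IsCompact.of_isClosed_subset (isCompact_univ_pi
      (fun e : A => isCompact_Icc (a := (l e : ℝ)) (b := (u e : ℝ)))) hclosed
    intro x hx
    rw [Set.mem_univ_pi]
    intro e
    exact ⟨(hx.2 e).1, (hx.2 e).2⟩
  have hΦcont : Continuous (fun x : A → ℝ => ∑ e, (x e)^2) :=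
    continuous_finset_sum _ (fun e _ => (continuous_apply e).pow 2)
  obtain ⟨w, hwP, hwmax⟩ := hcompact.exists_isMaxOn hPne hΦcont.continuousOn
  have hint : ∀ e, isInt (w e) := by
    by_contra hno
    push_neg at hno
    obtain ⟨e₀, he₀⟩ := hno
    obtain ⟨y, hyne, hplus, hminus, hboxp, hboxm⟩ :=
      core t hd b hbsub hbint l u w hwP.1 hwP.2 e₀ he₀
    have hp : (fun e => w e + y e) ∈ P := ⟨hplus, hboxp⟩
    have hm : (fun e => w e - y e) ∈ P := ⟨hminus, hboxm⟩
    have h1 : (∑ e, (w e + y e)^2) ≤ ∑ e, (w e)^2 := hwmax hp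
    have h2 : (∑ e, (w e - y e)^2) ≤ ∑ e, (w e)^2 := hwmax hm
    have hsum : (∑ e, (w e + y e)^2) + (∑ e, (w e - y e)^2)
        = 2 * (∑ e, (w e)^2) + 2 * (∑ e, (y e)^2) := by
      rw [← Finset.sum_add_distrib, Finset.mul_sum, Finset.mul_sum, ← Finset.sum_add_distrib]
      apply Finset.sum_congr rfl
      intro e _
      ring
    obtain ⟨ey, hey⟩ := Function.ne_iff.1 hyne
    have hpos : 0 < (y ey)^2 := by
      apply sq_pos_of_ne_zero
      simpa using hey
    have hle : (y ey)^2 ≤ ∑ e, (y e)^2 :=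
      Finset.single_le_sum (fun e _ => sq_nonneg (y e)) (Finset.mem_univ ey)
    linarith
  choose z hz using hint
  refine ⟨z, ?_, ?_⟩
  · have : (fun e => (z e : ℝ)) = w := by
      funext e; exact (hz e).symm
    rw [this]
    exact hwP.1
  · intro e
    have h1 := (hwP.2 e).1
    have h2 := (hwP.2 e).2
    rw [hz e] at h1 h2
    exact ⟨by exact_mod_cast h1, by exact_mod_cast h2⟩

end EGmain

section Final
open Finset
variable {V A : Type*} [Fintype V] [Fintype A] [DecidableEq V]

lemma flow_iff_excess (t hd : A → V) (B : Finset V → ℝ) (x : A → ℝ) :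
    IsSubmodularFlow t hd B x ↔ ∀ X, excess t hd x X ≤ B X := by
  unfold IsSubmodularFlow rhoF deltaF inEdges outEdges
  constructor
  · intro h X; rw [excess_eq]; exact h X
  · intro h X; rw [← excess_eq]; exact h X

theorem stmt_17' [Nonempty A] (t hd : A → V) (b : Finset V → ℤ)
    (hb : ∀ X Y : Finset V, b (X ∪ Y) + b (X ∩ Y) ≤ b X + b Y) (κ : ℤ)
    (hfeas : ∃ (x : A → ℝ) (σ₀ : ℝ), 0 ≤ σ₀ ∧
      IsSubmodularFlow t hd (fun X => (b X : ℝ)) x ∧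
      ∀ e : A, (κ : ℝ) ≤ x e ∧ x e ≤ (κ : ℝ) + σ₀) :
    ((sInf {σ : ℕ | ∃ x : A → ℤ,
        (∀ X : Finset V,
          (∑ e ∈ inEdges t hd X, x e) - (∑ e ∈ outEdges t hd X, x e) ≤ b X) ∧
        ∀ e : A, κ ≤ x e ∧ x e ≤ κ + (σ : ℤ)} : ℕ) : ℤ) =
      ⌈sInf {σ : ℝ | 0 ≤ σ ∧ ∃ x : A → ℝ,
        IsSubmodularFlow t hd (fun X => (b X : ℝ)) x ∧
        ∀ e : A, (κ : ℝ) ≤ x e ∧ x e ≤ (κ : ℝ) + σ}⌉ := by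
  classical
  obtain ⟨x₀, σ₀, hσ₀0, hx₀f, hx₀b⟩ := hfeas
  set Sreal : Set ℝ := {σ : ℝ | 0 ≤ σ ∧ ∃ x : A → ℝ,
    IsSubmodularFlow t hd (fun X => (b X : ℝ)) x ∧
    ∀ e : A, (κ : ℝ) ≤ x e ∧ x e ≤ (κ : ℝ) + σ} with hSrealdef
  set Snat : Set ℕ := {σ : ℕ | ∃ x : A → ℤ,
    (∀ X : Finset V,
      (∑ e ∈ inEdges t hd X, x e) - (∑ e ∈ outEdges t hd X, x e) ≤ b X) ∧
    ∀ e : A, κ ≤ x e ∧ x e ≤ κ + (σ : ℤ)} with hSnatdef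
  -- the compact feasible region in (flow, width) space
  set K : Set ((A → ℝ) × ℝ) := {p | 0 ≤ p.2 ∧ p.2 ≤ σ₀ ∧
    (∀ X, excess t hd p.1 X ≤ (b X : ℝ)) ∧
    ∀ e, (κ : ℝ) ≤ p.1 e ∧ p.1 e ≤ (κ : ℝ) + p.2} with hKdef
  have hKne : K.Nonempty := by
    exact ⟨(x₀, σ₀), ⟨hσ₀0, le_refl σ₀, (flow_iff_excess t hd _ x₀).1 hx₀f, hx₀b⟩⟩
  have hcontE : ∀ X : Finset V, Continuous (fun x : A → ℝ => excess t hd x X) := by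
    intro X
    unfold excess
    exact (continuous_finset_sum _ (fun e _ => continuous_apply e)).sub
      (continuous_finset_sum _ (fun e _ => continuous_apply e))
  have hKclosed : IsClosed K := by
    have hrw : K = {p : (A → ℝ) × ℝ | 0 ≤ p.2} ∩ {p | p.2 ≤ σ₀} ∩
        (⋂ X : Finset V, {p : (A → ℝ) × ℝ | excess t hd p.1 X ≤ (b X : ℝ)}) ∩
        ⋂ e : A, ({p : (A → ℝ) × ℝ | (κ : ℝ) ≤ p.1 e} ∩ {p | p.1 e ≤ (κ : ℝ) + p.2}) := by
      ext p
      simp only [hKdef, Set.mem_setOf_eq, Set.mem_inter_iff, Set.mem_iInter, forall_and]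
      tauto
    rw [hrw]
    refine IsClosed.inter (IsClosed.inter (IsClosed.inter ?_ ?_) ?_) ?_
    · exact isClosed_le continuous_const continuous_snd
    · exact isClosed_le continuous_snd continuous_const
    · exact isClosed_iInter (fun X =>
        isClosed_le ((hcontE X).comp continuous_fst) continuous_const)
    · refine isClosed_iInter (fun e => IsClosed.inter ?_ ?_)
      · exact isClosed_le continuous_const ((continuous_apply e).comp continuous_fst)
      · exact isClosed_le ((continuous_apply e).comp continuous_fst)
          (continuous_const.add continuous_snd)
  have hKcompact : IsCompact K := by
    apply IsCompact.of_isClosed_subset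
      ((isCompact_univ_pi (fun e : A => isCompact_Icc
        (a := (κ : ℝ)) (b := (κ : ℝ) + σ₀))).prod (isCompact_Icc (a := (0:ℝ)) (b := σ₀)))
      hKclosed
    rintro ⟨x, σ⟩ hp
    constructor
    · rw [Set.mem_univ_pi]
      intro e
      exact ⟨(hp.2.2.2 e).1, le_trans (hp.2.2.2 e).2 (by have := hp.2.1; simp; linarith)⟩
    · exact ⟨hp.1, hp.2.1⟩
  obtain ⟨⟨xs, s⟩, hsK, hsmin⟩ := hKcompact.exists_isMinOn hKne continuous_snd.continuousOn
  have hs0 : 0 ≤ s := hsK.1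
  have hsmem : s ∈ Sreal := by
    refine ⟨hs0, xs, (flow_iff_excess t hd _ xs).2 hsK.2.2.1, hsK.2.2.2⟩
  have hslb : ∀ σ ∈ Sreal, s ≤ σ := by
    rintro σ ⟨hσ0, x, hxf, hxb⟩
    by_cases hσσ₀ : σ ≤ σ₀
    · have : (x, σ) ∈ K := ⟨hσ0, hσσ₀, (flow_iff_excess t hd _ x).1 hxf, hxb⟩
      exact hsmin this
    · have h1 : s ≤ σ₀ := hsmin (show (x₀, σ₀) ∈ K from
        ⟨hσ₀0, le_refl σ₀, (flow_iff_excess t hd _ x₀).1 hx₀f, hx₀b⟩)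
      linarith [not_le.1 hσσ₀]
  have hinf : sInf Sreal = s := by
    apply le_antisymm
    · exact csInf_le ⟨0, fun σ hσ => hσ.1⟩ hsmem
    · exact le_csInf ⟨s, hsmem⟩ hslb
  -- apply Edmonds–Giles integrality with the box [κ, κ + ⌈s⌉]
  have hceil0 : 0 ≤ ⌈s⌉ := Int.ceil_nonneg hs0
  obtain ⟨z, hzf, hzb⟩ := eg_integrality t hd (fun X => (b X : ℝ))
    (fun X Y => by show ((b (X ∪ Y) : ℝ)) + b (X ∩ Y) ≤ b X + b Y; exact_mod_cast hb X Y) (fun X => ⟨b X, rfl⟩)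
    (fun _ => κ) (fun _ => κ + ⌈s⌉)
    ⟨xs, hsK.2.2.1, fun e => ⟨(hsK.2.2.2 e).1, by
      have h1 := (hsK.2.2.2 e).2
      have h2 : s ≤ (⌈s⌉ : ℝ) := Int.le_ceil s
      push_cast
      linarith⟩⟩
  have hznat : (⌈s⌉).toNat ∈ Snat := by
    refine ⟨z, ?_, ?_⟩
    · intro X
      have h := hzf X
      rw [excess_eq] at h
      have : ((∑ e ∈ inEdges t hd X, z e : ℤ) : ℝ) - ((∑ e ∈ outEdges t hd X, z e : ℤ) : ℝ)
          ≤ ((b X : ℤ) : ℝ) := by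
        push_cast
        unfold inEdges outEdges
        convert h using 2
      exact_mod_cast this
    · intro e
      refine ⟨(hzb e).1, ?_⟩
      have := (hzb e).2
      rwa [Int.toNat_of_nonneg hceil0]
  have hlbnat : ∀ n ∈ Snat, (⌈s⌉).toNat ≤ n := by
    intro n hn
    obtain ⟨x, hxf, hxb⟩ := hn
    have hmemr : ((n : ℝ)) ∈ Sreal := by
      refine ⟨by positivity, fun e => ((x e : ℤ) : ℝ), ?_, ?_⟩
      · rw [flow_iff_excess]
        intro X
        rw [excess_eq]
        have h := hxf X
        have : (((∑ e ∈ inEdges t hd X, x e) : ℤ) : ℝ) - (((∑ e ∈ outEdges t hd X, x e) : ℤ) : ℝ)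
            ≤ ((b X : ℤ) : ℝ) := by exact_mod_cast h
        push_cast at this
        unfold inEdges outEdges at this
        convert this using 2
      · intro e
        constructor
        · show (κ : ℝ) ≤ ((x e : ℤ) : ℝ); exact_mod_cast (hxb e).1
        · have := (hxb e).2
          have h2 : ((x e : ℤ) : ℝ) ≤ ((κ + (n : ℤ) : ℤ) : ℝ) := by exact_mod_cast this
          push_cast at h2 ⊢
          linarith
    have h1 : s ≤ (n : ℝ) := hslb _ hmemr
    have h2 : ⌈s⌉ ≤ (n : ℤ) := Int.ceil_le.2 (by exact_mod_cast h1)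
    omega
  have hne : Snat.Nonempty := ⟨_, hznat⟩
  have hnatinf : sInf Snat = (⌈s⌉).toNat := by
    apply le_antisymm
    · exact Nat.sInf_le hznat
    · exact hlbnat _ (Nat.sInf_mem hne)
  rw [hinf, hnatinf, Int.toNat_of_nonneg hceil0]

end Final

theorem stmt_17 {V A : Type*} [Fintype V] [Fintype A] [DecidableEq V] [Nonempty A]
    (t hd : A → V) (b : Finset V → ℤ)
    (hb : ∀ X Y : Finset V, b (X ∪ Y) + b (X ∩ Y) ≤ b X + b Y) (κ : ℤ)
    (hfeas : ∃ (x : A → ℝ) (σ₀ : ℝ), 0 ≤ σ₀ ∧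
      IsSubmodularFlow t hd (fun X => (b X : ℝ)) x ∧
      ∀ e : A, (κ : ℝ) ≤ x e ∧ x e ≤ (κ : ℝ) + σ₀) :
    ((sInf {σ : ℕ | ∃ x : A → ℤ,
        (∀ X : Finset V,
          (∑ e ∈ inEdges t hd X, x e) - (∑ e ∈ outEdges t hd X, x e) ≤ b X) ∧
        ∀ e : A, κ ≤ x e ∧ x e ≤ κ + (σ : ℤ)} : ℕ) : ℤ) =
      ⌈sInf {σ : ℝ | 0 ≤ σ ∧ ∃ x : A → ℝ,
        IsSubmodularFlow t hd (fun X => (b X : ℝ)) x ∧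
        ∀ e : A, (κ : ℝ) ≤ x e ∧ x e ≤ (κ : ℝ) + σ}⌉ := by
  exact stmt_17' t hd b hb κ hfeas
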